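/- arXiv:2010.00405 — 3 statements merged into one kernel-verified Lean document; each statement's English description precedes it below -/
import Mathlib

section
/- Let (X,μ) be a σ-finite measure space and Γ a countable group of invertible nonsingular transformations of (X,μ) with μ(X) < ∞. If for a.e. x ∈ X the sum over γ ∈ Γ of the Radon–Nikodym derivatives d(μ∘γ)/dμ(x) is infinite, then Γ is conservative: for every measurable B with μ(B) > 0 and a.e. x ∈ B there exists γ ∈ Γ, γ ≠ e, with γx ∈ B. -/
open MeasureTheory

theorem stmt4 {X : Type*} [MeasurableSpace X] (μ : Measure X) [IsFiniteMeasure μ]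
    {G : Type*} [Group G] [Countable G] [MulAction G X]
    (hmeas : ∀ γ : G, Measurable (fun x : X => γ • x))
    (hns : ∀ γ : G, μ.map (fun x : X => γ • x) ≪ μ ∧ μ ≪ μ.map (fun x : X => γ • x))
    (hsum : ∀ᵐ x ∂μ, ∑' γ : G, (μ.map (fun x : X => γ • x)).rnDeriv μ x = ⊤) :
    ∀ B : Set X, MeasurableSet B → 0 < μ B →
      ∀ᵐ x ∂μ.restrict B, ∃ γ : G, γ ≠ 1 ∧ γ • x ∈ B := by
  intro B hB hBpos
  classical
  set W : Set X := B ∩ ⋂ γ : G, {x | γ ≠ 1 → γ • x ∉ B} with hW_def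
  have hWmeas : MeasurableSet W := by
    apply hB.inter
    apply MeasurableSet.iInter
    intro γ
    by_cases h : γ = 1
    · simp [h]
    · have : {x : X | γ ≠ 1 → γ • x ∉ B} = (fun x => γ • x) ⁻¹' Bᶜ := by
        ext x; simp [h]
      rw [this]
      exact (hmeas γ) hB.compl
  have hWzero : μ W = 0 := by
    by_contra hne
    have hdisj : Pairwise (Function.onFun Disjoint fun γ : G => (fun x => γ • x) ⁻¹' W) := by
      intro γ δ hγδ
      refine Set.disjoint_left.mpr ?_
      intro x hxγ hxδ
      have h1 : γ • x ∈ B := hxγ.1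
      have h2 : (γ * δ⁻¹) • (δ • x) ∈ B := by
        simpa [smul_smul, mul_assoc] using h1
      have hne' : γ * δ⁻¹ ≠ 1 := by
        intro h; exact hγδ (mul_inv_eq_one.mp h)
      exact (Set.mem_iInter.mp hxδ.2 (γ * δ⁻¹)) hne' h2
    have hmap : ∀ γ : G, ∫⁻ x in W, (μ.map (fun x : X => γ • x)).rnDeriv μ x ∂μ
        = μ ((fun x : X => γ • x) ⁻¹' W) := by
      intro γ
      haveI : IsFiniteMeasure (μ.map (fun x : X => γ • x)) :=
        Measure.isFiniteMeasure_map μ _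
      rw [Measure.setLIntegral_rnDeriv (hns γ).1 W, Measure.map_apply (hmeas γ) hWmeas]
    have hkey : ∫⁻ x in W, (∑' γ : G, (μ.map (fun x : X => γ • x)).rnDeriv μ x) ∂μ
        = ∑' γ : G, μ ((fun x : X => γ • x) ⁻¹' W) := by
      rw [lintegral_tsum fun γ => (Measure.measurable_rnDeriv _ _).aemeasurable]
      exact tsum_congr hmap
    have hfin : ∑' γ : G, μ ((fun x : X => γ • x) ⁻¹' W) ≠ ⊤ := by
      rw [← measure_iUnion hdisj fun γ => (hmeas γ) hWmeas]
      exact measure_ne_top μ _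
    have htop : ∫⁻ x in W, (∑' γ : G, (μ.map (fun x : X => γ • x)).rnDeriv μ x) ∂μ = ⊤ := by
      have h1 : (fun x => ∑' γ : G, (μ.map (fun x : X => γ • x)).rnDeriv μ x)
          =ᵐ[μ.restrict W] fun _ => (⊤ : ENNReal) :=
        (ae_restrict_of_ae hsum).mono fun x hx => hx
      rw [lintegral_congr_ae h1, setLIntegral_const]
      exact ENNReal.top_mul hne
    rw [hkey] at htop
    exact hfin htop
  rw [ae_restrict_iff' hB, ae_iff]
  refine measure_mono_null ?_ hWzero
  intro x hx
  simp only [Set.mem_setOf_eq, not_forall, not_exists] at hx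
  obtain ⟨hxB, hforall⟩ := hx
  push_neg at hforall
  exact ⟨hxB, Set.mem_iInter.mpr hforall⟩
end

section
/- Let Γ be a countable group, (μ_γ)_{γ∈Γ} a family of probability densities relative to a probability measure P, and (b_γ)_{γ∈Γ} positive reals with Σ_γ b_γ = ∞ and Σ_γ b_γ² · E[(dP/dP_γ)²] < ∞, where P_γ ≪∼ P. Then for P-a.e. ω, dP_γ/dP(ω) ≥ b_γ for all but finitely many γ, and consequently Σ_γ dP_γ/dP(ω) = +∞ a.e. -/
open MeasureTheory Filter

theorem stmt5 {Ω : Type*} [MeasurableSpace Ω] (P : Measure Ω) [IsProbabilityMeasure P]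
    {G : Type*} [Countable G] (Pm : G → Measure Ω) [∀ γ, IsProbabilityMeasure (Pm γ)]
    (habs : ∀ γ, Pm γ ≪ P) (habs' : ∀ γ, P ≪ Pm γ)
    (b : G → ℝ) (hb : ∀ γ, 0 < b γ)
    (hdiv : ¬ Summable b)
    (hsq : ∑' γ : G, ENNReal.ofReal (b γ) ^ 2 * ∫⁻ ω, (P.rnDeriv (Pm γ) ω) ^ 2 ∂P ≠ ⊤) :
    ∀ᵐ ω ∂P,
      (∀ᶠ γ in Filter.cofinite, ENNReal.ofReal (b γ) ≤ (Pm γ).rnDeriv P ω) ∧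
      ∑' γ : G, (Pm γ).rnDeriv P ω = ⊤ := by
  set s : G → Set Ω := fun γ => {ω | (Pm γ).rnDeriv P ω < ENNReal.ofReal (b γ)} with hs_def
  -- Markov bound on each s γ
  have hmeas : ∀ γ, P (s γ) ≤ ENNReal.ofReal (b γ) ^ 2 * ∫⁻ ω, (P.rnDeriv (Pm γ) ω) ^ 2 ∂P := by
    intro γ
    set B := ENNReal.ofReal (b γ) with hB
    have hB0 : B ≠ 0 := by simp [hB, ENNReal.ofReal_eq_zero, not_le, hb γ]
    have hBt : B ≠ ⊤ := ENNReal.ofReal_ne_top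
    have hinv : (P.rnDeriv (Pm γ))⁻¹ =ᵐ[P] (Pm γ).rnDeriv P :=
      Measure.inv_rnDeriv (habs' γ)
    have hsub : s γ ≤ᵐ[P] {ω | B⁻¹ ^ 2 ≤ (P.rnDeriv (Pm γ) ω) ^ 2} := by
      filter_upwards [hinv] with ω hω hωs
      have h1 : (P.rnDeriv (Pm γ) ω)⁻¹ < B := by
        rw [← Pi.inv_apply, hω]; exact hωs
      have h2 : B⁻¹ < P.rnDeriv (Pm γ) ω := ENNReal.inv_lt_iff_inv_lt.mp h1
      exact pow_le_pow_left₀ zero_le h2.le 2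
    have hmarkov := mul_meas_ge_le_lintegral₀
      ((Measure.measurable_rnDeriv P (Pm γ)).pow_const 2).aemeasurable (B⁻¹ ^ 2) (μ := P)
    calc P (s γ) ≤ P {ω | B⁻¹ ^ 2 ≤ (P.rnDeriv (Pm γ) ω) ^ 2} := measure_mono_ae hsub
      _ = B ^ 2 * (B⁻¹ ^ 2 * P {ω | B⁻¹ ^ 2 ≤ (P.rnDeriv (Pm γ) ω) ^ 2}) := by
          rw [← mul_assoc, ← mul_pow, ENNReal.mul_inv_cancel hB0 hBt]; simp
      _ ≤ B ^ 2 * ∫⁻ ω, (P.rnDeriv (Pm γ) ω) ^ 2 ∂P := by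
          exact mul_le_mul_right hmarkov _
  have hsum : ∑' γ, P (s γ) ≠ ⊤ :=
    ne_top_of_le_ne_top hsq (ENNReal.tsum_le_tsum hmeas)
  -- divergence of ∑ b in ℝ≥0∞
  have htop : ∑' γ, ENNReal.ofReal (b γ) = ⊤ := by
    by_contra h
    refine hdiv ?_
    have := ENNReal.summable_toReal h
    simpa [ENNReal.toReal_ofReal (hb _).le] using this
  filter_upwards [ae_finite_setOf_mem hsum] with ω hω
  have hev : ∀ᶠ γ in Filter.cofinite, ENNReal.ofReal (b γ) ≤ (Pm γ).rnDeriv P ω := by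
    rw [eventually_cofinite]
    refine hω.subset ?_
    intro γ hγ
    simpa [hs_def, not_le] using hγ
  refine ⟨hev, ?_⟩
  -- finitely many bad indices
  haveI := hω.fintype
  have hptw : ∀ γ, ENNReal.ofReal (b γ) ≤
      (Pm γ).rnDeriv P ω + Set.indicator {γ | ω ∈ s γ} (fun γ => ENNReal.ofReal (b γ)) γ := by
    intro γ
    by_cases hγ : ω ∈ s γ
    · calc ENNReal.ofReal (b γ) ≤ Set.indicator {γ | ω ∈ s γ}
            (fun γ => ENNReal.ofReal (b γ)) γ :=
              le_of_eq (Set.indicator_of_mem (show γ ∈ {γ | ω ∈ s γ} from hγ)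
                (fun γ => ENNReal.ofReal (b γ))).symm
        _ ≤ _ := le_add_self
    · have : ENNReal.ofReal (b γ) ≤ (Pm γ).rnDeriv P ω := by
        simpa [hs_def, not_lt] using hγ
      exact this.trans le_self_add
  have hC : ∑' γ, Set.indicator {γ | ω ∈ s γ} (fun γ => ENNReal.ofReal (b γ)) γ ≠ ⊤ := by
    rw [← tsum_subtype {γ | ω ∈ s γ} (fun γ => ENNReal.ofReal (b γ)), tsum_fintype]
    exact (ENNReal.sum_lt_top.mpr fun _ _ => ENNReal.ofReal_lt_top).ne
  have hle : (⊤ : ENNReal) ≤ ∑' γ, (Pm γ).rnDeriv P ω +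
      ∑' γ, Set.indicator {γ | ω ∈ s γ} (fun γ => ENNReal.ofReal (b γ)) γ := by
    rw [← htop, ← ENNReal.tsum_add]
    exact ENNReal.tsum_le_tsum hptw
  by_contra h
  exact (ENNReal.add_ne_top.mpr ⟨h, hC⟩) (top_le_iff.mp hle)
end

section
/- Let (X,ν) be a σ-finite measure space, T : X → X an invertible ν-preserving transformation, X = ⊔ₙ Xₙ a countable partition into T-invariant sets, and f = 1 + Σₙ (λₙ − 1)·1_{Aₙ} with Aₙ ⊂ Xₙ, ν(Aₙ) < ∞, λₙ > 0. Let μ have density f with respect to ν. Then ∫_X |d(μ∘T⁻¹)/dμ − 1| dμ = Σₙ |1 − λₙ|·ν(Aₙ △ T Aₙ), and if this sum is finite then ∫_X (d(μ∘T⁻¹)/dμ − 1) dμ = 0. -/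
open MeasureTheory

theorem stmt6 {X : Type*} [MeasurableSpace X] (ν : Measure X) [SigmaFinite ν]
    (T : X ≃ᵐ X) (hT : ν.map T = ν)
    (Xn : ℕ → Set X) (hXnm : ∀ n, MeasurableSet (Xn n))
    (hXdisj : Pairwise (Function.onFun Disjoint Xn))
    (hXcover : (⋃ n, Xn n) = Set.univ)
    (hXinv : ∀ n, T '' Xn n = Xn n)
    (A : ℕ → Set X) (hAm : ∀ n, MeasurableSet (A n)) (hA : ∀ n, A n ⊆ Xn n)
    (hAfin : ∀ n, ν (A n) < ⊤)
    (l : ℕ → ℝ) (hl : ∀ n, 0 < l n)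
    (f : X → ℝ) (hf : ∀ x, f x = 1 + ∑' n, (l n - 1) * (A n).indicator 1 x)
    (μ : Measure X) (hμ : μ = ν.withDensity (fun x => ENNReal.ofReal (f x))) :
    ∫ x, |((μ.map T).rnDeriv μ x).toReal - 1| ∂μ
      = ∑' n, |1 - l n| * (ν (symmDiff (A n) (T '' A n))).toReal ∧
    (Summable (fun n => |1 - l n| * (ν (symmDiff (A n) (T '' A n))).toReal) →
      ∫ x, (((μ.map T).rnDeriv μ x).toReal - 1) ∂μ = 0) := by
  classical
  -- basic facts about T
  have hTset : ∀ (s : Set X) (x : X), x ∈ T '' s ↔ T.symm x ∈ s := by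
    intro s x
    constructor
    · rintro ⟨y, hy, rfl⟩; simpa using hy
    · intro h; exact ⟨T.symm x, h, T.apply_symm_apply x⟩
  have hTAm : ∀ n, MeasurableSet (T '' A n) := by
    intro n
    have h1 : T '' A n = T.symm ⁻¹' A n := Set.ext fun x => hTset _ x
    rw [h1]; exact T.symm.measurable (hAm n)
  have hνmapsymm : ν.map T.symm = ν := by
    conv_lhs => rw [← hT]
    rw [Measure.map_map T.symm.measurable T.measurable]
    simp
  have hνT : ∀ s : Set X, MeasurableSet s → ν (T '' s) = ν s := by
    intro s hs
    have h1 : T '' s = T.symm ⁻¹' s := Set.ext fun x => hTset _ x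
    rw [h1, ← Measure.map_apply T.symm.measurable hs, hνmapsymm]
  -- disjointness
  have hXuniq : ∀ {m n : ℕ} {x : X}, x ∈ Xn m → x ∈ Xn n → m = n := by
    intro m n x hm hn
    by_contra hne
    exact Set.disjoint_left.mp (hXdisj hne) hm hn
  have hTA_sub : ∀ n, T '' A n ⊆ Xn n := by
    intro n
    refine (Set.image_mono (hA n)).trans ?_
    rw [hXinv n]
  -- values of f
  have hfA : ∀ (m : ℕ) (x : X), x ∈ A m → f x = l m := by
    intro m x hx
    rw [hf]
    have h1 : (∑' n, (l n - 1) * (A n).indicator 1 x) = (l m - 1) * (A m).indicator 1 x := by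
      refine tsum_eq_single m ?_
      intro n hn
      have hxn : x ∉ A n := fun hxn => hn (hXuniq (hA n hxn) (hA m hx))
      simp [Set.indicator_of_notMem hxn]
    rw [h1, Set.indicator_of_mem hx]
    simp
  have hf1 : ∀ x : X, (∀ n, x ∉ A n) → f x = 1 := by
    intro x hx
    rw [hf]
    have h1 : (∑' n, (l n - 1) * (A n).indicator 1 x) = 0 := by
      rw [tsum_congr (fun n => ?_), tsum_zero]
      simp [Set.indicator_of_notMem (hx n)]
    rw [h1, add_zero]
  have hfpos : ∀ x, 0 < f x := by
    intro x
    by_cases hx : ∃ m, x ∈ A m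
    · obtain ⟨m, hm⟩ := hx
      rw [hfA m x hm]; exact hl m
    · push_neg at hx
      rw [hf1 x hx]; norm_num
  -- measurability of f
  have hfm : Measurable f := by
    have hu : Measurable (fun x => ∑' n, (A n).indicator (fun _ => ENNReal.ofReal (l n - 1)) x) :=
      Measurable.ennreal_tsum fun n => measurable_const.indicator (hAm n)
    have hv : Measurable (fun x => ∑' n, (A n).indicator (fun _ => ENNReal.ofReal (1 - l n)) x) :=
      Measurable.ennreal_tsum fun n => measurable_const.indicator (hAm n)
    have hform : f = fun x =>
        1 + ((∑' n, (A n).indicator (fun _ => ENNReal.ofReal (l n - 1)) x).toReal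
          - (∑' n, (A n).indicator (fun _ => ENNReal.ofReal (1 - l n)) x).toReal) := by
      funext x
      by_cases hx : ∃ m, x ∈ A m
      · obtain ⟨m, hm⟩ := hx
        have hnot : ∀ n, n ≠ m → x ∉ A n := fun n hn hxn => hn (hXuniq (hA n hxn) (hA m hm))
        have h1 : (∑' n, (A n).indicator (fun _ => ENNReal.ofReal (l n - 1)) x)
            = ENNReal.ofReal (l m - 1) := by
          rw [tsum_eq_single m (fun n hn => Set.indicator_of_notMem (hnot n hn) _),
            Set.indicator_of_mem hm]
        have h2 : (∑' n, (A n).indicator (fun _ => ENNReal.ofReal (1 - l n)) x)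
            = ENNReal.ofReal (1 - l m) := by
          rw [tsum_eq_single m (fun n hn => Set.indicator_of_notMem (hnot n hn) _),
            Set.indicator_of_mem hm]
        rw [hfA m x hm, h1, h2, ENNReal.toReal_ofReal', ENNReal.toReal_ofReal']
        rcases le_total 1 (l m) with h | h
        · rw [max_eq_left (by linarith), max_eq_right (by linarith)]; ring
        · rw [max_eq_right (by linarith), max_eq_left (by linarith)]; ring
      · push_neg at hx
        have hz : ∀ (c : ℕ → ENNReal),
            (∑' n, (A n).indicator (fun _ => c n) x) = 0 := by
          intro c
          rw [tsum_congr (fun n => Set.indicator_of_notMem (hx n) _), tsum_zero]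
        rw [hf1 x hx, hz, hz]
        simp
    rw [hform]
    exact measurable_const.add (hu.ennreal_toReal.sub hv.ennreal_toReal)
  -- the density g and the quotient density h
  set g : X → ENNReal := fun x => ENNReal.ofReal (f x) with hgdef
  have hgm : Measurable g := hfm.ennreal_ofReal
  have hg0 : ∀ x, g x ≠ 0 := by
    intro x
    simp only [hgdef, ne_eq, ENNReal.ofReal_eq_zero, not_le]
    exact hfpos x
  have hgtop : ∀ x, g x ≠ ⊤ := fun x => ENNReal.ofReal_ne_top
  have hmap : μ.map T = ν.withDensity (fun x => g (T.symm x)) := by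
    rw [hμ]
    ext s hs
    rw [Measure.map_apply T.measurable hs, withDensity_apply _ (T.measurable hs),
      withDensity_apply _ hs]
    conv_rhs => rw [← hT]
    rw [setLIntegral_map (f := fun a => g (T.symm a)) hs (hgm.comp T.symm.measurable) T.measurable]
    simp
  set h : X → ENNReal := fun x => g (T.symm x) / g x with hhdef
  have hhm : Measurable h := (hgm.comp T.symm.measurable).div hgm
  have hmap2 : μ.map T = μ.withDensity h := by
    rw [hmap, hμ, ← withDensity_mul ν hgm hhm]
    congr 1
    funext x
    simp only [Pi.mul_apply, hhdef]
    exact (ENNReal.mul_div_cancel (hg0 x) (hgtop x)).symm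
  have hsf : SigmaFinite μ := by rw [hμ]; infer_instance
  have hrn : (μ.map T).rnDeriv μ =ᵐ[μ] h := by
    rw [hmap2]; exact Measure.rnDeriv_withDensity μ hhm
  -- change of variables for integrals over μ
  have hμ' : μ = ν.withDensity (fun x => ((f x).toNNReal : ENNReal)) := by rw [hμ]; rfl
  have hint : ∀ φ : X → ℝ, ∫ x, φ x ∂μ = ∫ x, f x * φ x ∂ν := by
    intro φ
    rw [hμ', integral_withDensity_eq_integral_smul hfm.real_toNNReal φ]
    refine integral_congr_ae (Filter.EventuallyEq.of_eq (funext fun x => ?_))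
    rw [NNReal.smul_def, Real.coe_toNNReal _ (hfpos x).le, smul_eq_mul]
  -- pointwise value of h
  have hhval : ∀ x, (h x).toReal = f (T.symm x) / f x := by
    intro x
    simp only [hhdef, hgdef]
    rw [ENNReal.toReal_div, ENNReal.toReal_ofReal (hfpos _).le,
      ENNReal.toReal_ofReal (hfpos x).le]
  have hptw : ∀ x, f x * ((h x).toReal - 1) = f (T.symm x) - f x := by
    intro x
    rw [hhval, mul_sub, mul_one, mul_div_cancel₀ _ (hfpos x).ne']
  -- symmetric differences
  have hSm : ∀ n, MeasurableSet (symmDiff (A n) (T '' A n)) :=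
    fun n => (hAm n).symmDiff (hTAm n)
  have hSsub : ∀ n, symmDiff (A n) (T '' A n) ⊆ Xn n :=
    fun n => le_trans symmDiff_le_sup (sup_le (hA n) (hTA_sub n))
  have hSfin : ∀ n, ν (symmDiff (A n) (T '' A n)) ≠ ⊤ := by
    intro n
    have h1 : ν (symmDiff (A n) (T '' A n)) ≤ ν (A n) + ν (T '' A n) :=
      le_trans (measure_mono symmDiff_le_sup) (measure_union_le _ _)
    refine (h1.trans_lt ?_).ne
    rw [hνT _ (hAm n)]
    exact ENNReal.add_lt_top.2 ⟨hAfin n, hAfin n⟩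
  -- the key pointwise computation
  have key : ∀ x : X,
      (ENNReal.ofReal |f (T.symm x) - f x|
        = ∑' n, (symmDiff (A n) (T '' A n)).indicator
            (fun _ => ENNReal.ofReal |1 - l n|) x)
      ∧ (f (T.symm x) - f x
        = ∑' n, ((T '' A n).indicator (fun _ => l n - 1) x
            - (A n).indicator (fun _ => l n - 1) x)) := by
    intro x
    have hx0 : x ∈ ⋃ n, Xn n := hXcover ▸ Set.mem_univ x
    obtain ⟨m, hm⟩ := Set.mem_iUnion.mp hx0
    have hsymm_m : T.symm x ∈ Xn m := (hTset (Xn m) x).mp (by rw [hXinv m]; exact hm)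
    have hnotA : ∀ n, n ≠ m → x ∉ A n := fun n hn hx => hn (hXuniq (hA n hx) hm)
    have hnotTA : ∀ n, n ≠ m → x ∉ T '' A n := fun n hn hx => hn (hXuniq (hTA_sub n hx) hm)
    have hnotS : ∀ n, n ≠ m → x ∉ symmDiff (A n) (T '' A n) :=
      fun n hn hx => hn (hXuniq (hSsub n hx) hm)
    have hfx : f x = if x ∈ A m then l m else 1 := by
      by_cases hxa : x ∈ A m
      · rw [hfA m x hxa, if_pos hxa]
      · rw [if_neg hxa]
        refine hf1 x fun n => ?_
        rcases eq_or_ne n m with rfl | hne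
        · exact hxa
        · exact hnotA n hne
    have hfsx : f (T.symm x) = if x ∈ T '' A m then l m else 1 := by
      by_cases hxa : x ∈ T '' A m
      · rw [hfA m _ ((hTset _ x).mp hxa), if_pos hxa]
      · rw [if_neg hxa]
        refine hf1 _ fun n hn => ?_
        rcases eq_or_ne n m with rfl | hne
        · exact hxa ((hTset _ x).mpr hn)
        · exact hne (hXuniq (hA n hn) hsymm_m)
    have hFx : f (T.symm x) - f x
        = (if x ∈ T '' A m then l m else 1) - (if x ∈ A m then l m else 1) := by
      rw [hfsx, hfx]
    constructor
    · by_cases h1 : x ∈ A m <;> by_cases h2 : x ∈ T '' A m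
      · have hxS : x ∉ symmDiff (A m) (T '' A m) := by
          simp [Set.mem_symmDiff, h1, h2]
        rw [tsum_congr (fun n => ?_), tsum_zero, hFx, if_pos h1, if_pos h2]
        · simp
        · rcases eq_or_ne n m with rfl | hne
          · exact Set.indicator_of_notMem hxS _
          · exact Set.indicator_of_notMem (hnotS n hne) _
      · have hxS : x ∈ symmDiff (A m) (T '' A m) := by
          rw [Set.mem_symmDiff]; exact Or.inl ⟨h1, h2⟩
        rw [tsum_eq_single m (fun n hn => Set.indicator_of_notMem (hnotS n hn) _),
          Set.indicator_of_mem hxS, hFx, if_neg h2, if_pos h1]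
      · have hxS : x ∈ symmDiff (A m) (T '' A m) := by
          rw [Set.mem_symmDiff]; exact Or.inr ⟨h2, h1⟩
        rw [tsum_eq_single m (fun n hn => Set.indicator_of_notMem (hnotS n hn) _),
          Set.indicator_of_mem hxS, hFx, if_pos h2, if_neg h1, abs_sub_comm]
      · have hxS : x ∉ symmDiff (A m) (T '' A m) := by
          simp [Set.mem_symmDiff, h1, h2]
        rw [tsum_congr (fun n => ?_), tsum_zero, hFx, if_neg h1, if_neg h2]
        · simp
        · rcases eq_or_ne n m with rfl | hne
          · exact Set.indicator_of_notMem hxS _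
          · exact Set.indicator_of_notMem (hnotS n hne) _
    · rw [tsum_eq_single m (fun n hn => ?_), hFx]
      · by_cases h1 : x ∈ A m <;> by_cases h2 : x ∈ T '' A m <;>
          simp [Set.indicator_of_mem, Set.indicator_of_notMem, h1, h2]
      · rw [Set.indicator_of_notMem (hnotTA n hn), Set.indicator_of_notMem (hnotA n hn),
          sub_zero]
  -- the ENNReal-valued terms
  have hFmeas : Measurable fun x => f (T.symm x) - f x :=
    (hfm.comp T.symm.measurable).sub hfm
  have hlin : ∫⁻ x, ENNReal.ofReal |f (T.symm x) - f x| ∂ν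
      = ∑' n, ENNReal.ofReal |1 - l n| * ν (symmDiff (A n) (T '' A n)) := by
    rw [lintegral_congr (fun x => (key x).1),
      lintegral_tsum (fun n => (measurable_const.indicator (hSm n)).aemeasurable)]
    refine tsum_congr fun n => ?_
    rw [lintegral_indicator (hSm n) _, setLIntegral_const]
  -- Part 1
  have hmain1 : ∫ x, |f (T.symm x) - f x| ∂ν
      = ∑' n, |1 - l n| * (ν (symmDiff (A n) (T '' A n))).toReal := by
    rw [integral_eq_lintegral_of_nonneg_ae (Filter.Eventually.of_forall fun x => abs_nonneg _)
      hFmeas.abs.aestronglyMeasurable, hlin,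
      ENNReal.tsum_toReal_eq (fun n => ENNReal.mul_ne_top ENNReal.ofReal_ne_top (hSfin n))]
    exact tsum_congr fun n => by
      rw [ENNReal.toReal_mul, ENNReal.toReal_ofReal (abs_nonneg _)]
  have hLHS1 : ∫ x, |((μ.map T).rnDeriv μ x).toReal - 1| ∂μ
      = ∫ x, |f (T.symm x) - f x| ∂ν := by
    have e1 : ∫ x, |((μ.map T).rnDeriv μ x).toReal - 1| ∂μ
        = ∫ x, |(h x).toReal - 1| ∂μ :=
      integral_congr_ae (hrn.mono fun x hx => by beta_reduce; rw [hx])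
    rw [e1, hint fun x => |(h x).toReal - 1|]
    refine integral_congr_ae (Filter.Eventually.of_forall fun x => ?_)
    show f x * |(h x).toReal - 1| = |f (T.symm x) - f x|
    calc f x * |(h x).toReal - 1| = |f x| * |(h x).toReal - 1| := by
          rw [abs_of_pos (hfpos x)]
      _ = |f x * ((h x).toReal - 1)| := (abs_mul _ _).symm
      _ = |f (T.symm x) - f x| := by rw [hptw]
  refine ⟨hLHS1.trans hmain1, fun hsum => ?_⟩
  -- Part 2
  have hterm : ∀ n, ENNReal.ofReal |1 - l n| * ν (symmDiff (A n) (T '' A n))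
      = ENNReal.ofReal (|1 - l n| * (ν (symmDiff (A n) (T '' A n))).toReal) := by
    intro n
    rw [ENNReal.ofReal_mul (abs_nonneg _), ENNReal.ofReal_toReal (hSfin n)]
  have hsumtop : (∑' n, ENNReal.ofReal |1 - l n| * ν (symmDiff (A n) (T '' A n))) ≠ ⊤ := by
    rw [tsum_congr hterm, ← ENNReal.ofReal_tsum_of_nonneg
      (fun n => mul_nonneg (abs_nonneg _) ENNReal.toReal_nonneg) hsum]
    exact ENNReal.ofReal_ne_top
  have hGnorm : ∀ n, ∫⁻ x, ‖(T '' A n).indicator (fun _ => l n - 1) x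
      - (A n).indicator (fun _ => l n - 1) x‖₊ ∂ν
      = ENNReal.ofReal |1 - l n| * ν (symmDiff (A n) (T '' A n)) := by
    intro n
    have hpt : ∀ x, (‖(T '' A n).indicator (fun _ => l n - 1) x
        - (A n).indicator (fun _ => l n - 1) x‖₊ : ENNReal)
        = (symmDiff (A n) (T '' A n)).indicator (fun _ => ENNReal.ofReal |1 - l n|) x := by
      intro x
      by_cases h1 : x ∈ A n <;> by_cases h2 : x ∈ T '' A n <;>
        simp [Set.indicator_of_mem, Set.indicator_of_notMem, h1, h2, Set.mem_symmDiff,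
          ← enorm_eq_nnnorm, Real.enorm_eq_ofReal_abs, abs_sub_comm]
    rw [lintegral_congr hpt, lintegral_indicator (hSm n) _, setLIntegral_const]
  have hGint1 : ∀ n, Integrable ((T '' A n).indicator (fun _ => l n - 1)) ν := by
    intro n
    rw [integrable_indicator_iff (hTAm n)]
    exact integrableOn_const (by rw [hνT _ (hAm n)]; exact (hAfin n).ne)
  have hGint2 : ∀ n, Integrable ((A n).indicator (fun _ => l n - 1)) ν := by
    intro n
    rw [integrable_indicator_iff (hAm n)]
    exact integrableOn_const (hAfin n).ne
  have hGzero : ∀ n, ∫ x, ((T '' A n).indicator (fun _ => l n - 1) x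
      - (A n).indicator (fun _ => l n - 1) x) ∂ν = 0 := by
    intro n
    rw [integral_sub (hGint1 n) (hGint2 n), integral_indicator_const _ (hTAm n),
      integral_indicator_const _ (hAm n), measureReal_def, measureReal_def, hνT _ (hAm n), sub_self]
  have hFint0 : ∫ x, (f (T.symm x) - f x) ∂ν = 0 := by
    rw [integral_congr_ae (Filter.Eventually.of_forall fun x => (key x).2)]
    rw [integral_tsum (f := fun n x => (T '' A n).indicator (fun _ => l n - 1) x
        - (A n).indicator (fun _ => l n - 1) x) (fun n => ((measurable_const.indicator (hTAm n)).sub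
      (measurable_const.indicator (hAm n))).aestronglyMeasurable) ?_]
    · rw [tsum_congr hGzero, tsum_zero]
    · exact (tsum_congr hGnorm).trans_ne hsumtop
  have e1 : ∫ x, (((μ.map T).rnDeriv μ x).toReal - 1) ∂μ
      = ∫ x, ((h x).toReal - 1) ∂μ :=
    integral_congr_ae (hrn.mono fun x hx => by beta_reduce; rw [hx])
  rw [e1, hint fun x => (h x).toReal - 1]
  rw [integral_congr_ae (Filter.Eventually.of_forall fun x => hptw x)]
  exact hFint0
end
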